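/- (Simes' inequality / validity of Simes' p-value.) If P₁,…,P_k are independent random variables each uniformly distributed on [0,1] (or stochastically larger than uniform), then the Simes combined p-value p_S = min over i of (k · P_{(i)} / i), where P_{(1)} ≤ … ≤ P_{(k)} are the order statistics, satisfies Pr(p_S ≤ α) ≤ α for all α ∈ [0,1], with equality when the Pᵢ are exactly uniform. -/

import Mathlib

open MeasureTheory ProbabilityTheory

namespace SimesAux

open Set



noncomputable def cnt {k : ℕ} (β : ℝ) (x : Fin k → ℝ) (m : ℕ) : ℕ :=
  ∑ j : Fin k, if x j ≤ ((m : ℝ) + 1) * β then 1 else 0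

def Ev (k : ℕ) (β : ℝ) : Set (Fin k → ℝ) :=
  {x | ∃ m : Fin k, (m : ℕ) + 1 ≤ cnt β x m}

lemma measurable_cnt {k : ℕ} (β : ℝ) (m : ℕ) : Measurable (fun x : Fin k → ℝ => cnt β x m) := by
  apply Finset.measurable_sum
  intro j _
  exact Measurable.ite (measurableSet_le (measurable_pi_apply j) measurable_const)
    measurable_const measurable_const

lemma measurableSet_Ev (k : ℕ) (β : ℝ) : MeasurableSet (Ev k β) := by
  have : Ev k β = ⋃ m : Fin k, {x | (m : ℕ) + 1 ≤ cnt β x m} := by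
    ext x; simp [Ev]
  rw [this]
  exact MeasurableSet.iUnion fun m =>
    (measurable_cnt β m) (measurableSet_Ici (a := (m : ℕ) + 1))

lemma cnt_mono {k : ℕ} (β : ℝ) {x y : Fin k → ℝ} (hxy : ∀ j, x j ≤ y j) (m : ℕ) :
    cnt β y m ≤ cnt β x m := by
  apply Finset.sum_le_sum
  intro j _
  by_cases h : y j ≤ ((m : ℝ) + 1) * β
  · simp [h, (hxy j).trans h]
  · simp only [h, if_false]
    positivity

lemma Ev_lower {k : ℕ} (β : ℝ) {x y : Fin k → ℝ} (hxy : ∀ j, x j ≤ y j) (hy : y ∈ Ev k β) :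
    x ∈ Ev k β := by
  obtain ⟨m, hm⟩ := hy
  exact ⟨m, hm.trans (cnt_mono β hxy m)⟩

lemma cnt_eq_card {k : ℕ} (β : ℝ) (x : Fin k → ℝ) (m : ℕ) :
    cnt β x m = Fintype.card {j : Fin k // x j ≤ ((m : ℝ) + 1) * β} := by
  rw [Fintype.card_subtype, Finset.card_filter]
  rfl

/-- Lemma A : pointwise characterization of the Simes p-value event. -/
lemma simes_event_eq {k : ℕ} (hk : 0 < k) (x : Fin k → ℝ) (α : ℝ) :
    sInf {z : ℝ | ∃ i : Fin k, z = k * x (Tuple.sort x i) / (i.1 + 1)} ≤ α ↔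
      x ∈ Ev k (α / k) := by
  classical
  set y : Fin k → ℝ := x ∘ Tuple.sort x with hy
  have hmono : Monotone y := Tuple.monotone_sort x
  set g : Fin k → ℝ := fun i => k * y i / (i.1 + 1) with hg
  have hS : {z : ℝ | ∃ i : Fin k, z = k * x (Tuple.sort x i) / (i.1 + 1)} = Set.range g := by
    ext z; simp [hg, Set.range, eq_comm, hy]
  have hfin : (Set.range g).Finite := Set.finite_range g
  have hne : (Set.range g).Nonempty := ⟨g ⟨0, hk⟩, Set.mem_range_self _⟩
  rw [hS]
  have key : ∀ i : Fin k, (g i ≤ α ↔ (i : ℕ) + 1 ≤ cnt (α / k) x i) := by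
    intro i
    have hk' : (0:ℝ) < k := by exact_mod_cast hk
    have hi1 : (0:ℝ) < (i.1 : ℝ) + 1 := by positivity
    have h1 : g i ≤ α ↔ y i ≤ ((i.1 : ℝ) + 1) * (α / k) := by
      rw [hg]
      rw [div_le_iff₀ hi1]
      rw [mul_comm (k:ℝ) (y i)]
      rw [← le_div_iff₀ hk']
      constructor
      · intro h; calc y i ≤ α * ((i.1:ℝ)+1) / k := h
                 _ = ((i.1:ℝ)+1) * (α / k) := by ring
      · intro h; calc y i ≤ ((i.1:ℝ)+1) * (α / k) := h
                 _ = α * ((i.1:ℝ)+1) / k := by ring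
    have h2 : y i ≤ ((i.1 : ℝ) + 1) * (α / k) ↔
        (i : ℕ) < Fintype.card {j : Fin k // y j ≤ ((i.1 : ℝ) + 1) * (α / k)} :=
      by rw [Fintype.card_subtype]; exact (Tuple.lt_card_le_iff_apply_le_of_monotone hmono).symm
    have h3 : Fintype.card {j : Fin k // y j ≤ ((i.1 : ℝ) + 1) * (α / k)} =
        Fintype.card {j : Fin k // x j ≤ ((i.1 : ℝ) + 1) * (α / k)} :=
      Fintype.card_congr (Equiv.subtypeEquiv (Tuple.sort x) (fun j => Iff.rfl))
    rw [h1, h2, h3, ← cnt_eq_card]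
    exact Nat.lt_iff_add_one_le
  constructor
  · intro h
    obtain ⟨i, hi⟩ := hne.csInf_mem hfin
    exact ⟨i, (key i).1 (hi ▸ h)⟩
  · rintro ⟨m, hm⟩
    exact le_trans (csInf_le hfin.bddBelow (Set.mem_range_self m)) ((key m).2 hm)


lemma map_tuple_eq_pi {Ω : Type*} [MeasurableSpace Ω] (μ : Measure Ω) [IsProbabilityMeasure μ]
    {k : ℕ} (P : Fin k → Ω → ℝ) (hmeas : ∀ i, Measurable (P i))
    (hindep : ProbabilityTheory.iIndepFun P μ) :
    μ.map (fun ω (j : Fin k) => P j ω) = Measure.pi (fun i => μ.map (P i)) := by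
  have htuple : Measurable fun ω (j : Fin k) => P j ω := measurable_pi_lambda _ hmeas
  haveI : ∀ i, IsProbabilityMeasure (μ.map (P i)) :=
    fun i => Measure.isProbabilityMeasure_map (hmeas i).aemeasurable
  refine (Measure.pi_eq (μ := fun i => μ.map (P i)) fun s hs => ?_).symm
  rw [Measure.map_apply htuple (MeasurableSet.univ_pi hs)]
  have h1 : (fun ω (j : Fin k) => P j ω) ⁻¹' (Set.pi Set.univ s) = ⋂ i ∈ Finset.univ, P i ⁻¹' s i := by
    ext ω; simp [Set.mem_univ_pi]
  rw [h1]
  rw [ProbabilityTheory.iIndepFun_iff_measure_inter_preimage_eq_mul.mp hindep Finset.univ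
    (fun i _ => hs i)]
  exact Finset.prod_congr rfl fun i _ => (Measure.map_apply (hmeas i) (hs i)).symm

/-- restriction of a pi measure to a box. -/
lemma pi_restrict_box {k : ℕ} (ν : Fin k → Measure ℝ) [∀ i, IsFiniteMeasure (ν i)]
    (B : Fin k → Set ℝ) (hB : ∀ i, MeasurableSet (B i)) :
    (Measure.pi ν).restrict (Set.pi Set.univ B) = Measure.pi (fun i => (ν i).restrict (B i)) := by
  haveI : ∀ i, IsFiniteMeasure ((ν i).restrict (B i)) :=
    fun i => inferInstance
  refine (Measure.pi_eq (μ := fun i => (ν i).restrict (B i)) fun s hs => ?_).symm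
  rw [Measure.restrict_apply (MeasurableSet.univ_pi hs), ← Set.pi_inter_distrib,
    Measure.pi_pi]
  exact Finset.prod_congr rfl fun i _ => (Measure.restrict_apply (hs i)).symm


lemma unif_prob : IsProbabilityMeasure (volume.restrict (Icc (0:ℝ) 1)) := by
  constructor
  rw [Measure.restrict_apply MeasurableSet.univ, Set.univ_inter, Real.volume_Icc]
  norm_num

lemma unif_Iic {a : ℝ} (h0 : 0 ≤ a) (h1 : a ≤ 1) :
    (volume.restrict (Icc (0:ℝ) 1)) (Iic a) = ENNReal.ofReal a := by
  rw [Measure.restrict_apply measurableSet_Iic]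
  have : Iic a ∩ Icc (0:ℝ) 1 = Icc 0 a := by
    ext t; simp only [mem_inter_iff, mem_Iic, mem_Icc]
    constructor
    · rintro ⟨h, h', _⟩; exact ⟨h', h⟩
    · rintro ⟨h', h⟩; exact ⟨h, h', h.trans h1⟩
  rw [this, Real.volume_Icc, sub_zero]

lemma unif_Iio {a : ℝ} (h0 : 0 ≤ a) (h1 : a ≤ 1) :
    (volume.restrict (Icc (0:ℝ) 1)) (Iio a) = ENNReal.ofReal a := by
  rw [Measure.restrict_apply measurableSet_Iio]
  have : Iio a ∩ Icc (0:ℝ) 1 = Ico 0 a := by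
    ext t; simp only [mem_inter_iff, mem_Iio, mem_Icc, mem_Ico]
    constructor
    · rintro ⟨h, h', _⟩; exact ⟨h', h⟩
    · rintro ⟨h', h⟩; exact ⟨h, h', (le_of_lt h).trans h1⟩
  rw [this, Real.volume_Ico, sub_zero]

/-- one-dimensional stochastic dominance for down-closed sets. -/
lemma ray_le (ν : Measure ℝ) [IsProbabilityMeasure ν]
    (hsupp : ν (Icc (0:ℝ) 1)ᶜ = 0)
    (hcdf : ∀ t ∈ Icc (0:ℝ) 1, ν (Iic t) ≤ ENNReal.ofReal t)
    (D : Set ℝ) (hD : ∀ s t : ℝ, s ≤ t → t ∈ D → s ∈ D) :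
    ν D ≤ (volume.restrict (Icc (0:ℝ) 1)) D := by
  haveI := unif_prob
  rcases D.eq_empty_or_nonempty with h | hne
  · simp [h]
  by_cases hbd : BddAbove D
  · set a := sSup D with ha
    by_cases haD : a ∈ D
    · have hD2 : D = Iic a := by
        apply Set.eq_of_subset_of_subset
        · intro d hd; exact le_csSup hbd hd
        · intro t ht; exact hD t a ht haD
      rw [hD2]
      rcases lt_or_ge a 0 with h | h
      · have : ν (Iic a) = 0 := measure_mono_null (fun t ht => by
          simp only [mem_compl_iff, mem_Icc, not_and_or, not_le]
          left; exact lt_of_le_of_lt ht h) hsupp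
        rw [this]; exact zero_le
      rcases le_or_gt a 1 with h1 | h1
      · rw [unif_Iic h h1]; exact hcdf a ⟨h, h1⟩
      · calc ν (Iic a) ≤ 1 := prob_le_one
          _ = (volume.restrict (Icc (0:ℝ) 1)) (Iic a) := by
            rw [Measure.restrict_apply measurableSet_Iic]
            have : Iic a ∩ Icc (0:ℝ) 1 = Icc 0 1 :=
              Set.inter_eq_self_of_subset_right (fun t ht => le_trans ht.2 h1.le)
            rw [this, Real.volume_Icc]
            norm_num
    · have hD2 : D = Iio a := by
        apply Set.eq_of_subset_of_subset
        · intro d hd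
          refine lt_of_le_of_ne (le_csSup hbd hd) (fun h => haD ?_)
          rw [ha, ← h]
          exact hd
        · intro t ht
          obtain ⟨d, hd, htd⟩ := exists_lt_of_lt_csSup hne ht
          exact hD t d htd.le hd
      rw [hD2]
      rcases lt_or_ge a 0 with h | h
      · have : ν (Iio a) = 0 := measure_mono_null (fun t ht => by
          simp only [mem_compl_iff, mem_Icc, not_and_or, not_le]
          left; exact lt_trans ht h) hsupp
        rw [this]; exact zero_le
      rcases le_or_gt a 1 with h1 | h1
      · rw [unif_Iio h h1]
        exact le_trans (measure_mono Iio_subset_Iic_self) (hcdf a ⟨h, h1⟩)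
      · calc ν (Iio a) ≤ 1 := prob_le_one
          _ = (volume.restrict (Icc (0:ℝ) 1)) (Iio a) := by
            rw [Measure.restrict_apply measurableSet_Iio]
            have : Iio a ∩ Icc (0:ℝ) 1 = Icc 0 1 :=
              Set.inter_eq_self_of_subset_right (fun t ht => lt_of_le_of_lt ht.2 h1)
            rw [this, Real.volume_Icc]
            norm_num
  · have hD2 : D = univ := by
      apply Set.eq_univ_of_forall
      intro t
      rw [bddAbove_def] at hbd
      push_neg at hbd
      obtain ⟨d, hd, htd⟩ := hbd t
      exact hD t d htd.le hd
    rw [hD2]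
    calc ν univ = 1 := measure_univ
      _ = (volume.restrict (Icc (0:ℝ) 1)) univ := measure_univ.symm
      _ ≤ _ := le_rfl

lemma insertNth_zero_le {k : ℕ} {t t' : ℝ} {y y' : Fin k → ℝ}
    (ht : t' ≤ t) (hy : ∀ j, y' j ≤ y j) :
    ∀ j, (Fin.insertNth 0 t' y' : Fin (k+1) → ℝ) j ≤ (Fin.insertNth 0 t y : Fin (k+1) → ℝ) j := by
  intro j
  rcases Fin.eq_zero_or_eq_succ j with rfl | ⟨m, rfl⟩
  · simpa using ht
  · have h1 : (0 : Fin (k+1)).succAbove m = m.succ := by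
      simp [Fin.succAbove_zero]
    rw [← h1, Fin.insertNth_apply_succAbove, Fin.insertNth_apply_succAbove]
    exact hy m

/-- swapping all coordinates to uniform increases the probability of lower sets -/
lemma pi_le_unif : ∀ (k : ℕ) (ν : Fin k → Measure ℝ),
    (∀ i, IsProbabilityMeasure (ν i)) →
    (∀ i, ν i (Icc (0:ℝ) 1)ᶜ = 0) →
    (∀ i, ∀ t ∈ Icc (0:ℝ) 1, ν i (Iic t) ≤ ENNReal.ofReal t) →
    ∀ E : Set (Fin k → ℝ), MeasurableSet E →
    (∀ x y : Fin k → ℝ, (∀ j, x j ≤ y j) → y ∈ E → x ∈ E) →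
    Measure.pi ν E ≤ Measure.pi (fun _ => volume.restrict (Icc (0:ℝ) 1)) E := by
  intro k
  induction k with
  | zero =>
    intro ν hprob hsupp hcdf E hE hlow
    rw [Measure.pi_of_empty ν, Measure.pi_of_empty _]
  | succ k IH =>
    intro ν hprob hsupp hcdf E hE hlow
    haveI := unif_prob
    haveI := hprob
    set U := volume.restrict (Icc (0:ℝ) 1) with hU
    set e := MeasurableEquiv.piFinSuccAbove (fun _ : Fin (k+1) => ℝ) 0 with he
    set B : Set (ℝ × (Fin k → ℝ)) := e.symm ⁻¹' E with hB
    have hBm : MeasurableSet B := e.symm.measurable hE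
    have heB : e ⁻¹' B = E := by
      ext z
      simp [hB, MeasurableEquiv.symm_apply_apply]
    have hsymm : ∀ (t : ℝ) (y : Fin k → ℝ), ((t, y) ∈ B ↔ Fin.insertNth 0 t y ∈ E) := by
      intro t y
      rw [hB, Set.mem_preimage]
      have : e.symm (t, y) = Fin.insertNth 0 t y := rfl
      rw [this]
    set rest : Fin k → Measure ℝ := fun j => ν ((0 : Fin (k+1)).succAbove j) with hrest
    haveI : ∀ j, IsProbabilityMeasure (rest j) := fun j => hprob _
    have mp1 := measurePreserving_piFinSuccAbove ν 0
    have h1 : Measure.pi ν E = ((ν 0).prod (Measure.pi rest)) B := by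
      rw [← heB]
      exact mp1.measure_preimage hBm.nullMeasurableSet
    have hsecT : ∀ y : Fin k → ℝ, ∀ s t : ℝ, s ≤ t → (t, y) ∈ B → (s, y) ∈ B := by
      intro y s t hst ht
      rw [hsymm] at ht ⊢
      exact hlow _ _ (insertNth_zero_le hst (fun j => le_rfl)) ht
    have hsecY : ∀ t : ℝ, ∀ y y' : Fin k → ℝ, (∀ j, y' j ≤ y j) →
        (t, y) ∈ B → (t, y') ∈ B := by
      intro t y y' hyy ht
      rw [hsymm] at ht ⊢
      exact hlow _ _ (insertNth_zero_le le_rfl hyy) ht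
    have h2 : ((ν 0).prod (Measure.pi rest)) B ≤ (U.prod (Measure.pi rest)) B := by
      rw [Measure.prod_apply_symm hBm, Measure.prod_apply_symm hBm]
      apply lintegral_mono
      intro y
      exact ray_le (ν 0) (hsupp 0) (hcdf 0) _ (hsecT y)
    have h3 : (U.prod (Measure.pi rest)) B ≤ (U.prod (Measure.pi (fun _ : Fin k => U))) B := by
      rw [Measure.prod_apply hBm, Measure.prod_apply hBm]
      apply lintegral_mono
      intro t
      exact IH rest (fun j => hprob _) (fun j => hsupp _) (fun j => hcdf _)
        (Prod.mk t ⁻¹' B) (measurable_prodMk_left hBm)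
        (fun y' y hy hyB => hsecY t y y' hy hyB)
    have mp2 := measurePreserving_piFinSuccAbove (fun _ : Fin (k+1) => U) 0
    have h4 : (U.prod (Measure.pi (fun _ : Fin k => U))) B
        = Measure.pi (fun _ : Fin (k+1) => U) E := by
      rw [← heB]
      exact (mp2.measure_preimage hBm.nullMeasurableSet).symm
    calc Measure.pi ν E = ((ν 0).prod (Measure.pi rest)) B := h1
      _ ≤ (U.prod (Measure.pi rest)) B := h2
      _ ≤ (U.prod (Measure.pi (fun _ : Fin k => U))) B := h3
      _ = Measure.pi (fun _ : Fin (k+1) => U) E := h4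

lemma cnt_le {k : ℕ} (β : ℝ) (y : Fin k → ℝ) (m : ℕ) : cnt β y m ≤ k := by
  calc cnt β y m ≤ ∑ _j : Fin k, 1 := Finset.sum_le_sum (fun j _ => by
        split <;> simp)
    _ = k := by simp

lemma cnt_insertNth {k : ℕ} (β : ℝ) (i : Fin (k+1)) (t : ℝ) (y : Fin k → ℝ) (m : ℕ) :
    cnt β (i.insertNth t y) m = cnt β y m + (if t ≤ ((m:ℝ)+1)*β then 1 else 0) := by
  unfold cnt
  rw [Fin.sum_univ_succAbove
    (fun j => if (i.insertNth t y : Fin (k+1) → ℝ) j ≤ ((m:ℝ)+1)*β then 1 else 0) i]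
  simp only [Fin.insertNth_apply_same, Fin.insertNth_apply_succAbove]
  exact add_comm _ _

lemma insertNth_mem_Ev_of_le {k : ℕ} {β t : ℝ} {y : Fin k → ℝ} (j : Fin (k+1))
    (hall : ∀ l, y l < t) (ht : t ≤ ((k:ℝ)+1)*β) :
    (j.insertNth t y : Fin (k+1) → ℝ) ∈ Ev (k+1) β := by
  refine ⟨Fin.last k, ?_⟩
  have hy : cnt β y (Fin.last k : Fin (k+1)) = k := by
    unfold cnt
    rw [Finset.sum_congr rfl (fun l _ => if_pos ?_)]
    · simp
    · calc y l ≤ t := (hall l).le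
        _ ≤ ((k:ℝ)+1)*β := ht
      -- need cast : ((Fin.last k : ℕ):ℝ) = k
  rw [cnt_insertNth, hy]
  have : ((Fin.last k : Fin (k+1)) : ℕ) = k := rfl
  rw [this, if_pos (by exact_mod_cast ht)]

lemma insertNth_mem_Ev_iff {k : ℕ} {β t : ℝ} {y : Fin k → ℝ} (j : Fin (k+1))
    (hβ : 0 ≤ β) (ht : ((k:ℝ)+1)*β < t) :
    ((j.insertNth t y : Fin (k+1) → ℝ) ∈ Ev (k+1) β) ↔ y ∈ Ev k β := by
  constructor
  · rintro ⟨m, hm⟩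
    rw [cnt_insertNth] at hm
    have hmb : ¬ t ≤ (((m:ℕ):ℝ)+1)*β := by
      push_neg
      calc (((m:ℕ):ℝ)+1)*β ≤ ((k:ℝ)+1)*β := by
            apply mul_le_mul_of_nonneg_right _ hβ
            have : (m:ℕ) ≤ k := Nat.lt_succ_iff.mp m.isLt
            push_cast
            linarith [(Nat.cast_le (α := ℝ)).mpr this]
        _ < t := ht
    rw [if_neg hmb, add_zero] at hm
    have hmk : (m : ℕ) < k := by
      have := (cnt_le β y (m:ℕ))
      omega
    exact ⟨⟨(m:ℕ), hmk⟩, hm⟩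
  · rintro ⟨m, hm⟩
    refine ⟨m.castSucc, ?_⟩
    have : ((m.castSucc : Fin (k+1)) : ℕ) = (m : ℕ) := rfl
    rw [this, cnt_insertNth]
    exact hm.trans (Nat.le_add_right _ _)

/-- strict argmax sets -/
def Amax {k : ℕ} (j : Fin k) : Set (Fin k → ℝ) := {x | ∀ i, i ≠ j → x i < x j}

lemma measurableSet_Amax {k : ℕ} (j : Fin k) : MeasurableSet (Amax j) := by
  have : Amax j = ⋂ i : Fin k, {x : Fin k → ℝ | i ≠ j → x i < x j} := by
    ext x; simp [Amax]
  rw [this]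
  refine MeasurableSet.iInter fun i => ?_
  by_cases h : i = j
  · have : {x : Fin k → ℝ | i ≠ j → x i < x j} = Set.univ := by
      ext x; simp [h]
    rw [this]; exact MeasurableSet.univ
  · have : {x : Fin k → ℝ | i ≠ j → x i < x j} = {x | x i < x j} := by
      ext x; simp [h]
    rw [this]
    exact measurableSet_lt (measurable_pi_apply i) (measurable_pi_apply j)

lemma Amax_disjoint {k : ℕ} {j j' : Fin k} (h : j ≠ j') :
    Disjoint (Amax j) (Amax j') := by
  rw [Set.disjoint_left]
  intro x hx hx'
  exact absurd ((hx' j h).trans (hx j' (Ne.symm h))) (lt_irrefl _)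

lemma exists_Amax_or_tie {k : ℕ} (x : Fin (k+1) → ℝ) :
    (∃ j, x ∈ Amax j) ∨ (∃ i j, i ≠ j ∧ x i = x j) := by
  obtain ⟨j, _, hj⟩ := Finset.exists_max_image Finset.univ x ⟨0, Finset.mem_univ 0⟩
  by_cases h : ∀ i, i ≠ j → x i < x j
  · exact Or.inl ⟨j, h⟩
  · push_neg at h
    obtain ⟨i, hij, hge⟩ := h
    exact Or.inr ⟨i, j, hij, le_antisymm (hj i (Finset.mem_univ i)) hge⟩

lemma pi_ties_null {k : ℕ} (ν : Measure ℝ) [IsFiniteMeasure ν]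
    (hν : ∀ t : ℝ, ν {t} = 0) {i j : Fin (k+1)} (hij : i ≠ j) :
    Measure.pi (fun _ : Fin (k+1) => ν) {x | x i = x j} = 0 := by
  obtain ⟨l₀, hl₀⟩ := Fin.exists_succAbove_eq (Ne.symm hij)
  set e := MeasurableEquiv.piFinSuccAbove (fun _ : Fin (k+1) => ℝ) i with he
  set D : Set (Fin (k+1) → ℝ) := {x | x i = x j} with hD
  have hDm : MeasurableSet D :=
    measurableSet_eq_fun (measurable_pi_apply i) (measurable_pi_apply j)
  set B : Set (ℝ × (Fin k → ℝ)) := e.symm ⁻¹' D with hB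
  have hBm : MeasurableSet B := e.symm.measurable hDm
  have heB : e ⁻¹' B = D := by
    ext z; simp [hB, MeasurableEquiv.symm_apply_apply]
  have mp := measurePreserving_piFinSuccAbove (fun _ : Fin (k+1) => ν) i
  have h1 : Measure.pi (fun _ : Fin (k+1) => ν) D
      = (ν.prod (Measure.pi (fun _ : Fin k => ν))) B := by
    rw [← heB]
    exact mp.measure_preimage hBm.nullMeasurableSet
  rw [h1, Measure.prod_apply hBm]
  have hsec : ∀ t : ℝ, (Measure.pi (fun _ : Fin k => ν)) (Prod.mk t ⁻¹' B) = 0 := by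
    intro t
    have hsub : Prod.mk t ⁻¹' B ⊆ Set.pi Set.univ
        (Function.update (fun _ : Fin k => (Set.univ : Set ℝ)) l₀ {t}) := by
      intro y hy
      have h2 : e.symm (t, y) = i.insertNth t y := rfl
      have h3 : (i.insertNth t y : Fin (k+1) → ℝ) i = t :=
        Fin.insertNth_apply_same (α := fun _ : Fin (k+1) => ℝ) i t y
      have h4 : (i.insertNth t y : Fin (k+1) → ℝ) j = y l₀ := by
        rw [← hl₀]; exact Fin.insertNth_apply_succAbove (α := fun _ : Fin (k+1) => ℝ) i t y l₀
      have hy' : y l₀ = t := by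
        have h5 : (i.insertNth t y : Fin (k+1) → ℝ) ∈ D := by
          rw [← h2]; exact hy
        have h6 : (i.insertNth t y : Fin (k+1) → ℝ) i = (i.insertNth t y : Fin (k+1) → ℝ) j := h5
        rw [h3, h4] at h6
        exact h6.symm
      intro l _
      by_cases hl : l = l₀
      · subst hl
        rw [Function.update_self]
        exact hy'
      · rw [Function.update_of_ne hl]
        trivial
    refine measure_mono_null hsub ?_
    rw [Measure.pi_pi]
    refine Finset.prod_eq_zero (Finset.mem_univ l₀) ?_
    rw [Function.update_self]
    exact hν t
  rw [lintegral_congr hsec]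
  simp

lemma lint_g {n : ℕ} {β T c : ℝ} (hβ : 0 ≤ β) (hc : c = ((n:ℝ)+2)*β) (hcT : c ≤ T) :
    (∫⁻ t in Icc (0:ℝ) T, (if t ≤ c then (ENNReal.ofReal t)^(n+1)
      else ENNReal.ofReal (((n:ℝ)+1)*β*t^n)) ∂volume)
    = ENNReal.ofReal (c^(n+2)/((n:ℝ)+2)) + ENNReal.ofReal (β*T^(n+1) - β*c^(n+1)) := by
  have hc0 : 0 ≤ c := by rw [hc]; positivity
  rw [← Set.Icc_union_Ioc_eq_Icc hc0 hcT,
    lintegral_union measurableSet_Ioc ((Set.Iic_disjoint_Ioc le_rfl).mono Set.Icc_subset_Iic_self le_rfl)]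
  have h1 : (∫⁻ t in Icc (0:ℝ) c, (if t ≤ c then (ENNReal.ofReal t)^(n+1)
      else ENNReal.ofReal (((n:ℝ)+1)*β*t^n)) ∂volume)
      = ENNReal.ofReal (c^(n+2)/((n:ℝ)+2)) := by
    rw [setLIntegral_congr_fun measurableSet_Icc
      (fun t (ht : t ∈ Icc (0:ℝ) c) => by
        rw [if_pos ht.2, ← ENNReal.ofReal_pow ht.1])]
    rw [← ofReal_integral_eq_lintegral_ofReal
      ((continuous_pow (n+1)).integrableOn_Icc)
      (ae_restrict_of_forall_mem measurableSet_Icc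
        (fun x hx => pow_nonneg hx.1 (n+1)))]
    congr 1
    rw [integral_Icc_eq_integral_Ioc, ← intervalIntegral.integral_of_le hc0, integral_pow]
    rw [zero_pow (by omega), sub_zero]
    push_cast
    ring
  have h2 : (∫⁻ t in Ioc c T, (if t ≤ c then (ENNReal.ofReal t)^(n+1)
      else ENNReal.ofReal (((n:ℝ)+1)*β*t^n)) ∂volume)
      = ENNReal.ofReal (β*T^(n+1) - β*c^(n+1)) := by
    rw [setLIntegral_congr_fun measurableSet_Ioc
      (fun t (ht : t ∈ Ioc c T) => by
        rw [if_neg (not_le.mpr ht.1)])]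
    rw [← ofReal_integral_eq_lintegral_ofReal (f := fun x : ℝ => ((n:ℝ)+1)*β*x^n)
      ((continuous_const.mul (continuous_pow n)).integrableOn_Ioc)
      (ae_restrict_of_forall_mem measurableSet_Ioc
        (fun x hx => mul_nonneg (by positivity) (pow_nonneg (hc0.trans hx.1.le) n)))]
    congr 1
    rw [← intervalIntegral.integral_of_le hcT]
    rw [intervalIntegral.integral_const_mul, integral_pow]
    have hn : ((n:ℝ)+1) ≠ 0 := by positivity
    field_simp
  rw [h1, h2]

lemma core : ∀ (k : ℕ) (β T : ℝ), 0 ≤ β → ((k:ℝ)+1)*β ≤ T →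
    Measure.pi (fun _ : Fin (k+1) => volume.restrict (Icc (0:ℝ) T)) (Ev (k+1) β)
      = ENNReal.ofReal (((k:ℝ)+1)*β*T^k) := by
  intro k
  induction k with
  | zero =>
    intro β T hβ hc
    have hβT : β ≤ T := by
      have : ((0:ℕ):ℝ)+1 = 1 := by norm_num
      rw [this, one_mul] at hc
      exact hc
    have hEv : Ev 1 β = Set.pi Set.univ (fun _ : Fin 1 => Iic β) := by
      ext x
      have hcnt : ∀ m : ℕ, cnt β x m = if x 0 ≤ ((m:ℝ)+1)*β then 1 else 0 := by
        intro m; unfold cnt; rw [Fin.sum_univ_one]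
      constructor
      · rintro ⟨m, hm⟩
        rw [hcnt] at hm
        intro l _
        have hl : l = 0 := Subsingleton.elim _ _
        subst hl
        by_cases h : x 0 ≤ (((m:ℕ):ℝ)+1)*β
        · have hm1 : (m:ℕ) = 0 := by have := m.isLt; omega
          rw [hm1] at h
          norm_num at h
          exact h
        · rw [if_neg h] at hm; omega
      · intro hx
        refine ⟨0, ?_⟩
        rw [hcnt]
        have h0 : x 0 ≤ β := hx 0 (Set.mem_univ 0)
        have h1 : x 0 ≤ ((((0 : Fin 1):ℕ):ℝ)+1)*β := by
          norm_num
          exact h0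
        rw [if_pos h1]
        simp
    rw [hEv, Measure.pi_pi]
    have hI : Iic β ∩ Icc (0:ℝ) T = Icc 0 β := by
      ext t
      simp only [Set.mem_inter_iff, Set.mem_Iic, Set.mem_Icc]
      constructor
      · rintro ⟨h1, h2, _⟩; exact ⟨h2, h1⟩
      · rintro ⟨h1, h2⟩; exact ⟨h2, h1, h2.trans hβT⟩
    rw [Fin.prod_univ_one, Measure.restrict_apply measurableSet_Iic, hI, Real.volume_Icc]
    norm_num
  | succ k IH =>
    intro β T hβ hc
    set ν := volume.restrict (Icc (0:ℝ) T) with hν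
    have hc' : ((k:ℝ)+2)*β ≤ T := by push_cast at hc; linarith
    have hT0 : (0:ℝ) ≤ T := le_trans (by positivity) hc'
    have hatom : ∀ t : ℝ, ν {t} = 0 := by
      intro t
      rw [hν, Measure.restrict_apply (measurableSet_singleton t)]
      exact measure_mono_null Set.inter_subset_left Real.volume_singleton
    set c : ℝ := ((k:ℝ)+2)*β with hcdef
    have hc0 : 0 ≤ c := by positivity
    set E := Ev (k+1+1) β with hE
    have hEm : MeasurableSet E := measurableSet_Ev _ _
    set π1 := Measure.pi (fun _ : Fin (k+1) => ν) with hπ1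
    -- the value of each strict-argmax piece
    set g : ℝ → ENNReal := fun t => if t ≤ c then (ENNReal.ofReal t)^(k+1)
      else ENNReal.ofReal (((k:ℝ)+1)*β*t^k) with hg
    have hterm : ∀ j : Fin (k+1+1),
        Measure.pi (fun _ : Fin (k+1+1) => ν) (E ∩ Amax j)
          = ∫⁻ t in Icc (0:ℝ) T, g t ∂volume := by
      intro j
      set e := MeasurableEquiv.piFinSuccAbove (fun _ : Fin (k+1+1) => ℝ) j with he
      set B : Set (ℝ × (Fin (k+1) → ℝ)) := e.symm ⁻¹' (E ∩ Amax j) with hB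
      have hBm : MeasurableSet B := e.symm.measurable (hEm.inter (measurableSet_Amax j))
      have heB : e ⁻¹' B = E ∩ Amax j := by
        ext z; simp [hB, MeasurableEquiv.symm_apply_apply]
      have mp := measurePreserving_piFinSuccAbove (fun _ : Fin (k+1+1) => ν) j
      have h1 : Measure.pi (fun _ : Fin (k+1+1) => ν) (E ∩ Amax j) = (ν.prod π1) B := by
        rw [← heB]
        exact mp.measure_preimage hBm.nullMeasurableSet
      have hBsec : ∀ (t : ℝ) (y : Fin (k+1) → ℝ),
          ((t, y) ∈ B ↔ ((j.insertNth t y : Fin (k+1+1) → ℝ) ∈ E ∧ ∀ l, y l < t)) := by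
        intro t y
        have h2 : e.symm (t, y) = j.insertNth t y := rfl
        rw [hB, Set.mem_preimage, h2, Set.mem_inter_iff]
        constructor
        · rintro ⟨hmem, hmax⟩
          refine ⟨hmem, fun l => ?_⟩
          have := hmax (j.succAbove l) (Fin.succAbove_ne j l)
          rwa [Fin.insertNth_apply_succAbove (α := fun _ : Fin (k+1+1) => ℝ),
            Fin.insertNth_apply_same (α := fun _ : Fin (k+1+1) => ℝ)] at this
        · rintro ⟨hmem, hall⟩
          refine ⟨hmem, fun i hi => ?_⟩
          obtain ⟨l, hl⟩ := Fin.exists_succAbove_eq hi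
          rw [← hl, Fin.insertNth_apply_succAbove (α := fun _ : Fin (k+1+1) => ℝ),
            Fin.insertNth_apply_same (α := fun _ : Fin (k+1+1) => ℝ)]
          exact hall l
      have hsec : ∀ t ∈ Icc (0:ℝ) T, π1 (Prod.mk t ⁻¹' B) = g t := by
        intro t htT
        by_cases htc : t ≤ c
        · have hfull : Prod.mk t ⁻¹' B = Set.pi Set.univ (fun _ : Fin (k+1) => Iio t) := by
            ext y
            rw [Set.mem_preimage, hBsec]
            constructor
            · rintro ⟨_, hall⟩ l _
              exact hall l
            · intro hall
              have hall' : ∀ l, y l < t := fun l => hall l (Set.mem_univ l)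
              refine ⟨?_, hall'⟩
              refine insertNth_mem_Ev_of_le j hall' ?_
              rw [hcdef] at htc
              push_cast
              linarith
          rw [hfull, Measure.pi_pi]
          have hIio : ν (Iio t) = ENNReal.ofReal t := by
            rw [hν, Measure.restrict_apply measurableSet_Iio]
            have : Iio t ∩ Icc (0:ℝ) T = Ico 0 t := by
              ext u
              simp only [Set.mem_inter_iff, Set.mem_Iio, Set.mem_Icc, Set.mem_Ico]
              constructor
              · rintro ⟨h1, h2, _⟩; exact ⟨h2, h1⟩
              · rintro ⟨h1, h2⟩; exact ⟨h2, h1, (h2.le).trans htT.2⟩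
            rw [this, Real.volume_Ico, sub_zero]
          rw [hg]
          simp only [if_pos htc]
          rw [Finset.prod_congr rfl (fun l _ => hIio), Finset.prod_const, Finset.card_univ,
            Fintype.card_fin]
        · push_neg at htc
          have hpart : Prod.mk t ⁻¹' B
              = Ev (k+1) β ∩ Set.pi Set.univ (fun _ : Fin (k+1) => Iio t) := by
            ext y
            rw [Set.mem_preimage, hBsec, Set.mem_inter_iff]
            have hiff := insertNth_mem_Ev_iff (β := β) (t := t) (y := y) j hβ
              (by rw [hcdef] at htc; push_cast; linarith)
            constructor
            · rintro ⟨hmem, hall⟩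
              exact ⟨hiff.mp hmem, fun l _ => hall l⟩
            · rintro ⟨hmem, hall⟩
              exact ⟨hiff.mpr hmem, fun l => hall l (Set.mem_univ l)⟩
          rw [hpart, hπ1]
          rw [← Measure.restrict_apply (measurableSet_Ev _ _),
            pi_restrict_box _ _ (fun _ => measurableSet_Iio)]
          have hres : ν.restrict (Iio t) = volume.restrict (Icc (0:ℝ) t) := by
            rw [hν, Measure.restrict_restrict measurableSet_Iio]
            have : Iio t ∩ Icc (0:ℝ) T = Ico 0 t := by
              ext u
              simp only [Set.mem_inter_iff, Set.mem_Iio, Set.mem_Icc, Set.mem_Ico]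
              constructor
              · rintro ⟨h1, h2, _⟩; exact ⟨h2, h1⟩
              · rintro ⟨h1, h2⟩; exact ⟨h2, h1, (h2.le).trans htT.2⟩
            rw [this]
            exact Measure.restrict_congr_set Ico_ae_eq_Icc
          rw [show (fun _ : Fin (k+1) => ν.restrict (Iio t))
              = (fun _ : Fin (k+1) => volume.restrict (Icc (0:ℝ) t)) from funext fun _ => hres]
          rw [IH β t hβ (by rw [hcdef] at htc; push_cast; nlinarith)]
          simp only [hg]
          rw [if_neg (not_le.mpr htc)]
      rw [h1, Measure.prod_apply hBm]
      have : (∫⁻ t, π1 (Prod.mk t ⁻¹' B) ∂ν) = ∫⁻ t in Icc (0:ℝ) T, π1 (Prod.mk t ⁻¹' B) ∂volume := rfl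
      rw [this]
      exact setLIntegral_congr_fun measurableSet_Icc hsec
    -- decomposition into strict argmax pieces
    have hnull : Measure.pi (fun _ : Fin (k+1+1) => ν)
        (⋃ i, ⋃ j, ⋃ (_ : i ≠ j), {x : Fin (k+1+1) → ℝ | x i = x j}) = 0 := by
      refine measure_iUnion_null fun i => measure_iUnion_null fun j => ?_
      by_cases hij : i = j
      · simp [hij]
      · rw [Set.iUnion_eq_if, if_pos hij]
        exact pi_ties_null ν hatom hij
    have hsum : Measure.pi (fun _ : Fin (k+1+1) => ν) E
        = ∑ j : Fin (k+1+1), Measure.pi (fun _ : Fin (k+1+1) => ν) (E ∩ Amax j) := by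
      have hdisj : Pairwise (Function.onFun Disjoint (fun j => E ∩ Amax j)) := by
        intro j j' hjj
        exact (Amax_disjoint hjj).mono Set.inter_subset_right Set.inter_subset_right
      have hmeas : ∀ j : Fin (k+1+1), MeasurableSet (E ∩ Amax j) :=
        fun j => hEm.inter (measurableSet_Amax j)
      have hU : Measure.pi (fun _ : Fin (k+1+1) => ν) (⋃ j, E ∩ Amax j)
          = ∑ j : Fin (k+1+1), Measure.pi (fun _ : Fin (k+1+1) => ν) (E ∩ Amax j) := by
        rw [measure_iUnion hdisj hmeas, tsum_fintype]
      refine le_antisymm ?_ ?_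
      · calc Measure.pi (fun _ : Fin (k+1+1) => ν) E
            ≤ Measure.pi (fun _ : Fin (k+1+1) => ν) ((⋃ j, E ∩ Amax j)
              ∪ (⋃ i, ⋃ j, ⋃ (_ : i ≠ j), {x : Fin (k+1+1) → ℝ | x i = x j})) := by
              refine measure_mono fun x hx => ?_
              rcases exists_Amax_or_tie x with ⟨j, hj⟩ | ⟨i, j, hij, hxe⟩
              · exact Or.inl (Set.mem_iUnion.mpr ⟨j, hx, hj⟩)
              · exact Or.inr (Set.mem_iUnion.mpr ⟨i, Set.mem_iUnion.mpr
                  ⟨j, Set.mem_iUnion.mpr ⟨hij, hxe⟩⟩⟩)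
          _ ≤ Measure.pi (fun _ : Fin (k+1+1) => ν) (⋃ j, E ∩ Amax j)
              + Measure.pi (fun _ : Fin (k+1+1) => ν)
                (⋃ i, ⋃ j, ⋃ (_ : i ≠ j), {x : Fin (k+1+1) → ℝ | x i = x j}) :=
              measure_union_le _ _
          _ = ∑ j : Fin (k+1+1), Measure.pi (fun _ : Fin (k+1+1) => ν) (E ∩ Amax j) := by
              rw [hnull, add_zero, hU]
      · rw [← hU]
        exact measure_mono (Set.iUnion_subset fun j => Set.inter_subset_left)
    rw [hsum]
    rw [Finset.sum_congr rfl (fun j _ => hterm j), Finset.sum_const, Finset.card_univ,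
      Fintype.card_fin]
    have hlg := lint_g (n := k) (β := β) (T := T) (c := c) hβ rfl hc'
    rw [hlg]
    have hA : 0 ≤ c^(k+2)/((k:ℝ)+2) := by positivity
    have hBv : 0 ≤ β*T^(k+1) - β*c^(k+1) := by
      have : c^(k+1) ≤ T^(k+1) := pow_le_pow_left₀ hc0 (hc'.trans_eq rfl) (k+1)
      nlinarith
    rw [← ENNReal.ofReal_add hA hBv]
    rw [nsmul_eq_mul]
    rw [show ((k+1+1 : ℕ) : ENNReal) = ENNReal.ofReal ((k+1+1 : ℕ) : ℝ) by
      rw [ENNReal.ofReal_natCast]]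
    rw [← ENNReal.ofReal_mul (by positivity)]
    congr 1
    rw [hcdef]
    have hk2 : ((k:ℝ)+2) ≠ 0 := by positivity
    push_cast
    field_simp
    ring

end SimesAux

namespace SimesAux
open Set

lemma core' (k : ℕ) (hk : 0 < k) (β : ℝ) (hβ : 0 ≤ β) (h : (k:ℝ)*β ≤ 1) :
    Measure.pi (fun _ : Fin k => volume.restrict (Icc (0:ℝ) 1)) (Ev k β)
      = ENNReal.ofReal ((k:ℝ)*β) := by
  obtain ⟨k', rfl⟩ : ∃ k', k = k'+1 := ⟨k-1, (Nat.succ_pred_eq_of_pos hk).symm⟩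
  have hco := core k' β 1 hβ (by push_cast at h ⊢; linarith)
  rw [hco, one_pow, mul_one]
  push_cast
  ring_nf

end SimesAux

open SimesAux Set in
theorem simes_valid
    {Ω : Type*} [MeasurableSpace Ω] (μ : Measure Ω) [IsProbabilityMeasure μ]
    (k : ℕ) (hk : 0 < k) (P : Fin k → Ω → ℝ)
    (hmeas : ∀ i, Measurable (P i))
    (hrange : ∀ i ω, P i ω ∈ Set.Icc (0:ℝ) 1)
    (hindep : iIndepFun P μ)
    (hvalid : ∀ i, ∀ α ∈ Set.Icc (0:ℝ) 1, μ {ω | P i ω ≤ α} ≤ ENNReal.ofReal α) :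
    (∀ α ∈ Set.Icc (0:ℝ) 1,
      μ {ω | sInf {x : ℝ | ∃ i : Fin k,
          x = k * (fun j => P j ω) (Tuple.sort (fun j => P j ω) i) / (i.1 + 1)} ≤ α}
        ≤ ENNReal.ofReal α) ∧
    ((∀ i, μ.map (P i) = volume.restrict (Set.Icc (0:ℝ) 1)) →
      ∀ α ∈ Set.Icc (0:ℝ) 1,
        μ {ω | sInf {x : ℝ | ∃ i : Fin k,
            x = k * (fun j => P j ω) (Tuple.sort (fun j => P j ω) i) / (i.1 + 1)} ≤ α}
          = ENNReal.ofReal α) := by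
  classical
  have hk' : (0:ℝ) < k := by exact_mod_cast hk
  set tuple : Ω → (Fin k → ℝ) := fun ω j => P j ω with htup
  have htuple : Measurable tuple := measurable_pi_lambda _ hmeas
  have hmap := map_tuple_eq_pi μ P hmeas hindep
  have hEvset : ∀ α : ℝ,
      {ω | sInf {x : ℝ | ∃ i : Fin k,
          x = k * (fun j => P j ω) (Tuple.sort (fun j => P j ω) i) / (i.1 + 1)} ≤ α}
        = tuple ⁻¹' (Ev k (α / k)) := by
    intro α
    ext ω
    exact simes_event_eq hk (fun j => P j ω) α
  have hmeasure : ∀ α : ℝ,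
      μ {ω | sInf {x : ℝ | ∃ i : Fin k,
          x = k * (fun j => P j ω) (Tuple.sort (fun j => P j ω) i) / (i.1 + 1)} ≤ α}
        = Measure.pi (fun i => μ.map (P i)) (Ev k (α / k)) := by
    intro α
    rw [hEvset α, ← Measure.map_apply htuple (measurableSet_Ev k (α / k)), hmap]
  have hβcond : ∀ α : ℝ, α ∈ Set.Icc (0:ℝ) 1 → 0 ≤ α / k ∧ (k:ℝ) * (α / k) ≤ 1 := by
    intro α hα
    constructor
    · exact div_nonneg hα.1 hk'.le
    · rw [mul_div_cancel₀ _ (ne_of_gt hk')]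
      exact hα.2
  constructor
  · intro α hα
    rw [hmeasure α]
    have h1 : Measure.pi (fun i => μ.map (P i)) (Ev k (α / k))
        ≤ Measure.pi (fun _ => volume.restrict (Icc (0:ℝ) 1)) (Ev k (α / k)) := by
      apply pi_le_unif k (fun i => μ.map (P i))
      · exact fun i => Measure.isProbabilityMeasure_map (hmeas i).aemeasurable
      · intro i
        rw [Measure.map_apply (hmeas i) measurableSet_Icc.compl]
        have : P i ⁻¹' (Icc (0:ℝ) 1)ᶜ = ∅ := by
          ext ω
          simp only [Set.mem_preimage, Set.mem_compl_iff, Set.mem_empty_iff_false, iff_false,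
            not_not]
          exact hrange i ω
        rw [this, measure_empty]
      · intro i t ht
        rw [Measure.map_apply (hmeas i) measurableSet_Iic]
        exact hvalid i t ht
      · exact measurableSet_Ev k (α / k)
      · exact fun x y hxy hy => Ev_lower _ hxy hy
    refine le_trans h1 ?_
    rw [core' k hk (α / k) (hβcond α hα).1 (hβcond α hα).2,
      mul_div_cancel₀ _ (ne_of_gt hk')]
  · intro huni α hα
    rw [hmeasure α]
    have : (fun i : Fin k => μ.map (P i)) = fun _ => volume.restrict (Icc (0:ℝ) 1) :=
      funext fun i => huni i
    rw [this, core' k hk (α / k) (hβcond α hα).1 (hβcond α hα).2,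
      mul_div_cancel₀ _ (ne_of_gt hk')]
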